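/- For each k ≥ 0, N₂^k N₃ = [[4c_k − d_k, √3(3c_k − d_k)],[√3 c_k, d_k]], where c_k = (λ^{k+1} − μ^{k+1})/√13 and d_k = [((7−√13)/2)λ^{k+1} − ((7+√13)/2)μ^{k+1}]/√13 with λ = (3+√13)/2 and μ = (3−√13)/2, and N₂ = [[2,√3],[√3,1]], N₃ = [[2,√3],[√3,2]]. -/

import Mathlib

noncomputable def lamE : ℝ := (3 + Real.sqrt 13) / 2
noncomputable def muE : ℝ := (3 - Real.sqrt 13) / 2

noncomputable def cseq (k : ℕ) : ℝ := (lamE ^ (k + 1) - muE ^ (k + 1)) / Real.sqrt 13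

noncomputable def dseq (k : ℕ) : ℝ :=
  ((7 - Real.sqrt 13) / 2 * lamE ^ (k + 1) - (7 + Real.sqrt 13) / 2 * muE ^ (k + 1)) /
    Real.sqrt 13

noncomputable def N₂ : Matrix (Fin 2) (Fin 2) ℝ := !![2, Real.sqrt 3; Real.sqrt 3, 1]
noncomputable def N₃ : Matrix (Fin 2) (Fin 2) ℝ := !![2, Real.sqrt 3; Real.sqrt 3, 2]

lemma hs13 : Real.sqrt 13 * Real.sqrt 13 = 13 := Real.mul_self_sqrt (by norm_num)

lemma hs13ne : Real.sqrt 13 ≠ 0 := by positivity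

lemma hs3 : Real.sqrt 3 * Real.sqrt 3 = 3 := Real.mul_self_sqrt (by norm_num)

lemma cseq_zero : cseq 0 = 1 := by
  unfold cseq lamE muE; field_simp; ring

lemma dseq_zero : dseq 0 = 2 := by
  unfold dseq lamE muE
  rw [div_eq_iff hs13ne]
  ring

lemma cseq_rec (k : ℕ) : cseq (k + 1) = 5 * cseq k - dseq k := by
  unfold cseq dseq
  rw [show k + 1 + 1 = (k + 1) + 1 from rfl, pow_succ lamE, pow_succ muE]
  unfold lamE muE
  field_simp
  ring

lemma dseq_key (s a b : ℝ) (hs : s * s = 13) (hne : s ≠ 0) :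
    ((7 - s) / 2 * (a * ((3 + s) / 2)) - (7 + s) / 2 * (b * ((3 - s) / 2))) / s =
      9 * ((a - b) / s) - 2 * (((7 - s) / 2 * a - (7 + s) / 2 * b) / s) := by
  field_simp
  linear_combination -(a - b) * hs

lemma dseq_rec (k : ℕ) : dseq (k + 1) = 9 * cseq k - 2 * dseq k := by
  unfold cseq dseq
  rw [show k + 1 + 1 = (k + 1) + 1 from rfl, pow_succ lamE, pow_succ muE]
  unfold lamE muE
  exact dseq_key _ _ _ hs13 hs13ne

theorem N2_pow_mul_N3 (k : ℕ) :
    N₂ ^ k * N₃ =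
      !![4 * cseq k - dseq k, Real.sqrt 3 * (3 * cseq k - dseq k);
         Real.sqrt 3 * cseq k, dseq k] := by
  induction k with
  | zero =>
    rw [pow_zero, one_mul, N₃, cseq_zero, dseq_zero]
    norm_num
  | succ k ih =>
    rw [pow_succ', mul_assoc, ih, N₂, Matrix.mul_fin_two, cseq_rec, dseq_rec]
    ext i j
    fin_cases i <;> fin_cases j <;> simp <;>
      [linear_combination cseq k * hs3; ring; ring;
       linear_combination (3 * cseq k - dseq k) * hs3]
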